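/- arXiv:2207.05590 — 3 statements merged into one kernel-verified Lean document; each statement's English description precedes it below -/
import Mathlib

section
/- Let G' = (V, E') be a finite simple graph, p a positive natural number, and x : V → {0,1} with Σ_{v∈V} x_v = p. For each j ∈ V let Q_j = {k ∈ V : (j,k) ∈ E'}. Then x satisfies p·(1 − x_j) ≥ Σ_{k∈Q_j} x_k for all j ∈ V if and only if the support of x is an independent set of G'. -/
def SimpleGraph.IsIndep {V : Type*} (G : SimpleGraph V) (S : Set V) : Prop :=
  ∀ a ∈ S, ∀ b ∈ S, ¬ G.Adj a b

theorem stmt_1 {V : Type*} [Fintype V] (G : SimpleGraph V) [DecidableRel G.Adj]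
    (p : ℕ) (hp : 0 < p) (x : V → ℕ) (hx : ∀ v, x v ≤ 1)
    (hsum : ∑ v, x v = p) :
    (∀ j, ∑ k ∈ G.neighborFinset j, x k ≤ p * (1 - x j)) ↔
      G.IsIndep {v | x v = 1} := by
  constructor
  · intro h a ha b hb hab
    have ha' : x a = 1 := ha
    have hb' : x b = 1 := hb
    have := h a
    rw [ha'] at this
    simp only [Nat.sub_self, Nat.mul_zero, Nat.le_zero] at this
    have hbmem : b ∈ G.neighborFinset a := by
      rw [G.mem_neighborFinset]; exact hab
    have : x b = 0 := by
      have := Finset.sum_eq_zero_iff.mp this b hbmem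
      exact this
    omega
  · intro h j
    rcases Nat.lt_or_ge (x j) 1 with hj | hj
    · have : x j = 0 := by omega
      rw [this]
      simp only [Nat.sub_zero, Nat.mul_one]
      rw [← hsum]
      exact Finset.sum_le_sum_of_subset (Finset.subset_univ _)
    · have hj1 : x j = 1 := le_antisymm (hx j) hj
      rw [hj1]
      simp only [Nat.sub_self, Nat.mul_zero, Nat.le_zero]
      apply Finset.sum_eq_zero
      intro k hk
      by_contra hk0
      have hk1 : x k = 1 := by have := hx k; omega
      exact h j hj1 k hk1 ((G.mem_neighborFinset j k).mp hk)
end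

section
/- Let G' = (V, E') be a finite simple graph and x : V → {0,1} whose support S is an independent set of G' with |S| ≤ p. For each j ∈ V, let Q_j be the neighborhood of j in G', let q_j be the maximum size of an independent set in the subgraph of G' induced by Q_j ∪ {j}, and let n_j = min(p, q_j). Then x satisfies n_j·(1 − x_j) ≥ Σ_{k∈Q_j} x_k for every j ∈ V. -/
theorem stmt_2 {V : Type*} [Fintype V] [DecidableEq V]
    (G : SimpleGraph V) [DecidableRel G.Adj]
    (p : ℕ) (x : V → ℕ) (hx : ∀ v, x v ≤ 1)
    (hind : G.IsIndep {v | x v = 1}) (hcard : ∑ v, x v ≤ p)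
    (q : V → ℕ)
    (hq : ∀ j, IsGreatest
      {n | ∃ t : Finset V, ↑t ⊆ insert j (G.neighborSet j) ∧
        G.IsIndep ↑t ∧ t.card = n} (q j)) :
    ∀ j, ∑ k ∈ G.neighborFinset j, x k ≤ min p (q j) * (1 - x j) := by
  intro j
  rcases Nat.eq_zero_or_pos (x j) with hj | hj
  · rw [hj, Nat.sub_zero, mul_one, le_min_iff]
    constructor
    · exact le_trans (Finset.sum_le_sum_of_subset (Finset.subset_univ _)) hcard
    · -- sum = card of filter x=1 within neighbors
      have hsum : ∑ k ∈ G.neighborFinset j, x k =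
          ((G.neighborFinset j).filter (fun k => x k = 1)).card := by
        rw [Finset.card_filter]
        apply Finset.sum_congr rfl
        intro k _
        rcases Nat.le_one_iff_eq_zero_or_eq_one.mp (hx k) with h | h <;> simp [h]
      rw [hsum]
      apply (hq j).2
      refine ⟨(G.neighborFinset j).filter (fun k => x k = 1), ?_, ?_, rfl⟩
      · intro v hv
        simp only [Finset.coe_filter, Set.mem_setOf_eq, Finset.mem_filter,
          SimpleGraph.mem_neighborFinset] at hv
        exact Set.mem_insert_of_mem _ hv.1
      · intro a ha b hb
        simp only [Finset.coe_filter, Set.mem_setOf_eq, Finset.mem_filter] at ha hb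
        exact hind a ha.2 b hb.2
  · have hj1 : x j = 1 := le_antisymm (hx j) hj
    have : ∀ k ∈ G.neighborFinset j, x k = 0 := by
      intro k hk
      rw [SimpleGraph.mem_neighborFinset] at hk
      by_contra h
      have hk1 : x k = 1 := le_antisymm (hx k) (Nat.pos_of_ne_zero h)
      exact hind j hj1 k hk1 hk
    rw [Finset.sum_eq_zero this]
    exact Nat.zero_le _
end

section
/- Let I, J be finite sets with |J| ≥ p ≥ 1, and s : I × J → ℝ. For each client i ∈ I let F_i ⊆ J be the set obtained from J by removing some set of p − 1 sites that maximize s_{i,·} (the p − 1 'furthest' sites from i). Then for every S ⊆ J with |S| = p and every i ∈ I, we have min_{j∈S} s_{ij} = min_{j∈S∩F_i} s_{ij}; in particular S ∩ F_i ≠ ∅ and restricting assignments to F_i does not change the p-median objective value. -/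
theorem stmt_9 {I J : Type*} [Fintype I] [Fintype J] [DecidableEq J]
    (p : ℕ) (hp : 1 ≤ p) (hJ : p ≤ Fintype.card J)
    (s : I × J → ℝ)
    (D : I → Finset J) (hDcard : ∀ i, (D i).card = p - 1)
    (hDmax : ∀ i, ∀ j ∈ D i, ∀ k ∉ D i, s (i, k) ≤ s (i, j))
    (F : I → Finset J) (hF : ∀ i, F i = Finset.univ \ D i)
    (S : Finset J) (hScard : S.card = p) (i : I) :
    ∃ hne : (S ∩ F i).Nonempty,
      S.inf' (Finset.card_pos.mp (by omega)) (fun j => s (i, j)) =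
        (S ∩ F i).inf' hne (fun j => s (i, j)) := by
  have hSF : S ∩ F i = S \ D i := by
    rw [hF i]
    ext j
    simp [Finset.mem_inter, Finset.mem_sdiff]
  have hne : (S ∩ F i).Nonempty := by
    rw [hSF]
    rw [← Finset.card_pos]
    have := Finset.card_le_card (Finset.inter_subset_right (s₁ := S) (s₂ := D i))
    have h2 := Finset.card_sdiff_add_card_inter S (D i)
    have := hDcard i
    omega
  refine ⟨hne, le_antisymm ?_ ?_⟩
  · apply Finset.le_inf'
    intro j hj
    exact Finset.inf'_le _ (Finset.inter_subset_left hj)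
  · apply Finset.le_inf'
    intro j hj
    by_cases hjD : j ∈ D i
    · obtain ⟨k, hk⟩ := id hne
      have hkD : k ∉ D i := by
        rw [hSF] at hk
        exact (Finset.mem_sdiff.mp hk).2
      calc (S ∩ F i).inf' hne (fun j => s (i, j)) ≤ s (i, k) := Finset.inf'_le _ hk
        _ ≤ s (i, j) := hDmax i j hjD k hkD
    · apply Finset.inf'_le
      rw [hSF, Finset.mem_sdiff]
      exact ⟨hj, hjD⟩
end
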